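/- Let x ≥ 2 be an integer and let m be a positive integer. Then the pseudoachromatic index ψ(m) of the complete graph K_m satisfies: ψ(m) ≤ 2x(m−x−1) + 1 if 4x² − x ≤ m ≤ 4x² + 3x − 1, and ψ(m) ≤ ⌊(m(m−1)/2)/(x+1)⌋ if 4x² + 3x ≤ m ≤ 4(x+1)² − (x+1) − 1. -/

import Mathlib

open Finset

/-- A complete edge-colouring of the complete graph `K_m` with `k` colours:
every colour appears on some edge, and every two distinct colours appear
on two edges sharing a common vertex. -/
def IsCompleteEdgeColouring {m k : ℕ} (Γ : Sym2 (Fin m) → Fin k) : Prop :=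
  (∀ c : Fin k, ∃ x y : Fin m, x ≠ y ∧ Γ s(x, y) = c) ∧
  (∀ c₁ c₂ : Fin k, c₁ ≠ c₂ →
    ∃ x y z : Fin m, x ≠ y ∧ x ≠ z ∧ Γ s(x, y) = c₁ ∧ Γ s(x, z) = c₂)

lemma support_card_le {m : ℕ} (e : Sym2 (Fin m)) :
    (Finset.univ.filter (fun v => v ∈ e)).card ≤ 2 := by
  induction e using Sym2.ind with
  | _ p q =>
    have hsub : (Finset.univ.filter (fun v => v ∈ s(p, q))) ⊆ {p, q} := by
      intro v hv
      simp only [Finset.mem_filter, Sym2.mem_iff] at hv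
      rcases hv.2 with h | h <;> simp [h]
    calc (Finset.univ.filter (fun v => v ∈ s(p, q))).card ≤ ({p, q} : Finset (Fin m)).card :=
          Finset.card_le_card hsub
    _ ≤ 2 := Finset.card_insert_le p {q} |>.trans (by simp)

lemma key {m k x : ℕ} (Γ : Sym2 (Fin m) → Fin k) (h : IsCompleteEdgeColouring Γ) :
    2 * (k * (x + 1)) + m ≤ m * m ∨
    ∃ s a : ℕ, 1 ≤ a ∧ a ≤ x ∧ s ≤ 2 * a ∧ s ≤ m ∧
      2 * k + 2 * a + s * s + s ≤ 2 * (s * m) + 2 := by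
  classical
  set U : Finset (Sym2 (Fin m)) := Finset.univ.filter (fun e => ¬ e.IsDiag) with hUdef
  have hUcard : U.card = Nat.choose m 2 := by
    have h := Sym2.card_subtype_not_diag (α := Fin m)
    rw [Fintype.card_fin] at h
    rw [hUdef, ← Fintype.card_subtype]
    exact h
  have hsq : m * (m - 1) + m = m * m := by
    cases m with
    | zero => simp
    | succ t => simp [Nat.succ_sub_one]; ring
  have hU2 : 2 * U.card + m ≤ m * m := by
    rw [hUcard, Nat.choose_two_right]
    have h1 : m * (m - 1) / 2 * 2 ≤ m * (m - 1) := Nat.div_mul_le_self _ _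
    linarith
  set F : Fin k → Finset (Sym2 (Fin m)) := fun c => U.filter (fun e => Γ e = c) with hFdef
  have hsum : ∑ c, (F c).card = U.card :=
    (Finset.card_eq_sum_card_fiberwise (fun e _ => Finset.mem_univ (Γ e))).symm
  have hF1 : ∀ c, 1 ≤ (F c).card := by
    intro c
    obtain ⟨p, q, hpq, hc⟩ := h.1 c
    have hmem : s(p, q) ∈ F c := by
      simp only [hFdef, hUdef, Finset.mem_filter, Finset.mem_univ, true_and,
        Sym2.mk_isDiag_iff]
      exact ⟨hpq, hc⟩
    exact Finset.card_pos.mpr ⟨_, hmem⟩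
  by_cases hall : ∀ c, x + 1 ≤ (F c).card
  · left
    have hks : k * (x + 1) ≤ ∑ c, (F c).card := by
      calc k * (x + 1) = ∑ _c : Fin k, (x + 1) := by
            simp [Finset.sum_const, Finset.card_univ, mul_comm]
      _ ≤ _ := Finset.sum_le_sum (fun c _ => hall c)
    linarith [hks, hU2, hsum.le, hsum.ge]
  · right
    push_neg at hall
    obtain ⟨c₀, hc₀⟩ := hall
    set a := (F c₀).card with hadef
    have ha1 : 1 ≤ a := hF1 c₀
    have hax : a ≤ x := by omega
    set S : Finset (Fin m) := Finset.univ.filter (fun v => ∃ e ∈ F c₀, v ∈ e) with hSdef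
    set s := S.card with hsdef
    have hScard : s ≤ 2 * a := by
      have hsub : S ⊆ (F c₀).biUnion (fun e => Finset.univ.filter (fun v => v ∈ e)) := by
        intro v hv
        simp only [hSdef, Finset.mem_filter, Finset.mem_univ, true_and] at hv
        obtain ⟨e, he, hve⟩ := hv
        exact Finset.mem_biUnion.mpr ⟨e, he, by simp [hve]⟩
      calc s ≤ ((F c₀).biUnion (fun e => Finset.univ.filter (fun v => v ∈ e))).card :=
            Finset.card_le_card hsub
      _ ≤ ∑ e ∈ F c₀, (Finset.univ.filter (fun v => v ∈ e)).card := Finset.card_biUnion_le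
      _ ≤ ∑ _e ∈ F c₀, 2 := Finset.sum_le_sum (fun e _ => support_card_le e)
      _ = 2 * a := by simp [mul_comm, hadef]
    have hsm : s ≤ m := le_trans (Finset.card_le_univ S) (by simp)
    set I : Finset (Sym2 (Fin m)) := U.filter (fun e => ∃ v ∈ S, v ∈ e) with hIdef
    -- bound the number of edges incident with S
    have hIcard : 2 * I.card + s * s + s ≤ 2 * (s * m) := by
      set p : Sym2 (Fin m) → Prop := fun e => ∀ v ∈ e, v ∈ S with hpdef
      have hsplit : (I.filter p).card + (I.filter (fun e => ¬ p e)).card = I.card :=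
        Finset.card_filter_add_card_filter_not (fun e => p e)
      have hint : (I.filter p).card ≤ Nat.choose s 2 := by
        have hsub : I.filter p ⊆ S.offDiag.image Sym2.mk.uncurry := by
          intro e
          induction e using Sym2.ind with
          | _ u v =>
            intro he
            simp only [Finset.mem_filter, hIdef, hUdef, Finset.mem_univ, true_and,
              Sym2.mk_isDiag_iff, hpdef] at he
            refine Finset.mem_image.mpr ⟨(u, v), Finset.mem_offDiag.mpr ⟨?_, ?_, ?_⟩, rfl⟩
            · exact he.2 u (Sym2.mem_mk_left u v)
            · exact he.2 v (Sym2.mem_mk_right u v)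
            · exact he.1.1
        calc (I.filter p).card ≤ (S.offDiag.image Sym2.mk.uncurry).card := Finset.card_le_card hsub
        _ = Nat.choose s 2 := Sym2.card_image_offDiag S
      have hch : 2 * Nat.choose s 2 + s ≤ s * s := by
        have h1 : s * (s - 1) / 2 * 2 ≤ s * (s - 1) := Nat.div_mul_le_self _ _
        have h2 : s * (s - 1) + s = s * s := by
          cases s with
          | zero => simp
          | succ t => simp [Nat.succ_sub_one]; ring
        rw [Nat.choose_two_right]
        linarith
      have hcross : (I.filter (fun e => ¬ p e)).card ≤ s * (m - s) := by
        have hsub : I.filter (fun e => ¬ p e) ⊆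
            (S ×ˢ Sᶜ).image (fun pr : Fin m × Fin m => s(pr.1, pr.2)) := by
          intro e
          induction e using Sym2.ind with
          | _ u v =>
            intro he
            simp only [Finset.mem_filter, hIdef, hUdef, Finset.mem_univ, true_and,
              Sym2.mk_isDiag_iff, hpdef] at he
            obtain ⟨⟨huv, w, hwS, hwe⟩, hnp⟩ := he
            push_neg at hnp
            obtain ⟨z, hze, hzS⟩ := hnp
            rcases Sym2.mem_iff.mp hwe with rfl | rfl <;>
              rcases Sym2.mem_iff.mp hze with rfl | rfl
            · exact absurd hwS hzS
            · exact Finset.mem_image.mpr ⟨(w, z), Finset.mem_product.mpr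
                ⟨hwS, Finset.mem_compl.mpr hzS⟩, rfl⟩
            · exact Finset.mem_image.mpr ⟨(w, z), Finset.mem_product.mpr
                ⟨hwS, Finset.mem_compl.mpr hzS⟩, Sym2.eq_swap⟩
            · exact absurd hwS hzS
        calc (I.filter (fun e => ¬ p e)).card
            ≤ ((S ×ˢ Sᶜ).image (fun pr : Fin m × Fin m => s(pr.1, pr.2))).card :=
              Finset.card_le_card hsub
        _ ≤ (S ×ˢ Sᶜ).card := Finset.card_image_le
        _ = s * (m - s) := by
              rw [Finset.card_product, Finset.card_compl]
              simp [hsdef]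
      have hms : s * (m - s) + s * s = s * m := by
        rw [← Nat.left_distrib, Nat.sub_add_cancel hsm]
      linarith
    -- every colour class hits I
    have hIsum : ∑ c, (I.filter (fun e => Γ e = c)).card = I.card :=
      (Finset.card_eq_sum_card_fiberwise (fun e _ => Finset.mem_univ (Γ e))).symm
    have hIc : ∀ c, c ≠ c₀ → 1 ≤ (I.filter (fun e => Γ e = c)).card := by
      intro c hc
      obtain ⟨u, v, w, huv, huw, h1, h2⟩ := h.2 c₀ c (fun hh => hc hh.symm)
      have huS : u ∈ S := by
        simp only [hSdef, Finset.mem_filter, Finset.mem_univ, true_and]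
        refine ⟨s(u, v), ?_, Sym2.mem_mk_left u v⟩
        simp only [hFdef, hUdef, Finset.mem_filter, Finset.mem_univ, true_and,
          Sym2.mk_isDiag_iff]
        exact ⟨huv, h1⟩
      have hmem : s(u, w) ∈ I.filter (fun e => Γ e = c) := by
        simp only [Finset.mem_filter, hIdef, hUdef, Finset.mem_univ, true_and,
          Sym2.mk_isDiag_iff]
        exact ⟨⟨huw, u, huS, Sym2.mem_mk_left u w⟩, h2⟩
      exact Finset.card_pos.mpr ⟨_, hmem⟩
    have hIc₀ : a ≤ (I.filter (fun e => Γ e = c₀)).card := by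
      apply Finset.card_le_card
      intro e
      induction e using Sym2.ind with
      | _ u v =>
        intro he
        have he' := he
        simp only [hFdef, hUdef, Finset.mem_filter, Finset.mem_univ, true_and,
          Sym2.mk_isDiag_iff] at he'
        simp only [Finset.mem_filter, hIdef, hUdef, Finset.mem_univ, true_and,
          Sym2.mk_isDiag_iff]
        refine ⟨⟨he'.1, u, ?_, Sym2.mem_mk_left u v⟩, he'.2⟩
        simp only [hSdef, Finset.mem_filter, Finset.mem_univ, true_and]
        exact ⟨s(u, v), he, Sym2.mem_mk_left u v⟩
    have hk1 : 1 ≤ k := c₀.pos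
    have hbig : a + (k - 1) ≤ I.card := by
      rw [← hIsum, ← Finset.add_sum_erase _ _ (Finset.mem_univ c₀)]
      have h1 : k - 1 ≤ ∑ c ∈ Finset.univ.erase c₀, (I.filter (fun e => Γ e = c)).card := by
        calc k - 1 = (Finset.univ.erase c₀).card := by
              simp [Finset.card_erase_of_mem, Finset.card_univ]
        _ = ∑ _c ∈ Finset.univ.erase c₀, 1 := by simp
        _ ≤ _ := Finset.sum_le_sum (fun c hc => hIc c (Finset.ne_of_mem_erase hc))
      exact add_le_add hIc₀ h1
    refine ⟨s, a, ha1, hax, hScard, hsm, ?_⟩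
    have : k + a ≤ I.card + 1 := by omega
    linarith

/-- The pseudoachromatic index of the complete graph `K_m`: the largest number of
colours in a complete edge-colouring of `K_m`. -/
noncomputable def pseudoachromaticIndex (m : ℕ) : ℕ :=
  sSup {k : ℕ | ∃ Γ : Sym2 (Fin m) → Fin k, IsCompleteEdgeColouring Γ}

set_option maxHeartbeats 1600000 in
theorem stmt_4 (x m : ℕ) (hx : 2 ≤ x) (hm : 0 < m) :
    (4 * x ^ 2 - x ≤ m ∧ m ≤ 4 * x ^ 2 + 3 * x - 1 →
      pseudoachromaticIndex m ≤ 2 * x * (m - x - 1) + 1) ∧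
    (4 * x ^ 2 + 3 * x ≤ m ∧ m ≤ 4 * (x + 1) ^ 2 - (x + 1) - 1 →
      pseudoachromaticIndex m ≤ (m * (m - 1) / 2) / (x + 1)) := by
  have hx' : (2:ℤ) ≤ (x:ℤ) := by exact_mod_cast hx
  constructor
  · rintro ⟨h1, h2⟩
    have hlow : 4 * x ^ 2 ≤ m + x := Nat.sub_le_iff_le_add.mp h1
    have hxm : x + 1 ≤ m := by nlinarith
    have hhigh : m + 1 ≤ 4 * x ^ 2 + 3 * x := by
      have h' : (1:ℕ) ≤ 4 * x ^ 2 + 3 * x := by nlinarith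
      exact (Nat.le_sub_iff_add_le h').mp h2
    unfold pseudoachromaticIndex
    refine csSup_le' fun k hk => ?_
    obtain ⟨Γ, hΓ⟩ := hk
    have hxm' : ((x:ℤ)) + 1 ≤ (m:ℤ) := by exact_mod_cast hxm
    have hlow' : 4 * (x:ℤ) ^ 2 ≤ (m:ℤ) + x := by exact_mod_cast hlow
    have hhigh' : (m:ℤ) + 1 ≤ 4 * (x:ℤ) ^ 2 + 3 * x := by exact_mod_cast hhigh
    zify [show x ≤ m by omega, show 1 ≤ m - x by omega]
    rcases key (x := x) Γ hΓ with hA | ⟨s, a, ha1, hax, hsa, hsm, hkey⟩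
    · have hA' : 2 * ((k:ℤ) * (x + 1)) + m ≤ (m:ℤ) * m := by exact_mod_cast hA
      have p1 : (0:ℤ) ≤ (m:ℤ) + x - 4 * x ^ 2 := by linarith
      have p2 : (0:ℤ) ≤ 4 * (x:ℤ) ^ 2 + 3 * x - 1 - m := by linarith
      have q1 : (0:ℤ) ≤ 16 * (x:ℤ) ^ 3 - 9 * x ^ 2 - 3 * x + 2 := by nlinarith
      have q2 : (0:ℤ) ≤ 3 * (x:ℤ) ^ 2 + 3 * x := by positivity
      have q3 : (0:ℤ) ≤ 4 * (x:ℤ) - 1 := by linarith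
      have hmain : (m:ℤ) * m - m ≤ ((x:ℤ) + 1) * (2 * (2 * x * ((m:ℤ) - x - 1) + 1)) := by
        nlinarith [mul_nonneg p2 q1, mul_nonneg p1 q2, mul_nonneg (mul_nonneg q3 p1) p2, q3]
      have h5 : (2 * ((x:ℤ) + 1)) * k ≤ (2 * ((x:ℤ) + 1)) * (2 * x * ((m:ℤ) - x - 1) + 1) := by
        nlinarith [hA', hmain]
      exact le_of_mul_le_mul_left h5 (by linarith)
    · have hkey' : 2 * (k:ℤ) + 2 * a + s * s + s ≤ 2 * ((s:ℤ) * m) + 2 := by exact_mod_cast hkey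
      have hsa' : (s:ℤ) ≤ 2 * a := by exact_mod_cast hsa
      have hax' : (a:ℤ) ≤ x := by exact_mod_cast hax
      have r1 : (0:ℤ) ≤ 2 * x - s := by linarith
      have r2 : (0:ℤ) ≤ 2 * (m:ℤ) - 2 - 2 * x - s := by nlinarith
      linarith [mul_nonneg r1 r2]
  · rintro ⟨h1, _h2⟩
    unfold pseudoachromaticIndex
    refine csSup_le' fun k hk => ?_
    obtain ⟨Γ, hΓ⟩ := hk
    rw [Nat.le_div_iff_mul_le (Nat.succ_pos x), Nat.le_div_iff_mul_le two_pos]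
    have hlo' : 4 * (x:ℤ) ^ 2 + 3 * x ≤ (m:ℤ) := by exact_mod_cast h1
    zify [show 1 ≤ m from hm]
    rcases key (x := x) Γ hΓ with hA | ⟨s, a, ha1, hax, hsa, hsm, hkey⟩
    · have hA' : 2 * ((k:ℤ) * (x + 1)) + m ≤ (m:ℤ) * m := by exact_mod_cast hA
      linarith
    · have hkey' : 2 * (k:ℤ) + 2 * a + s * s + s ≤ 2 * ((s:ℤ) * m) + 2 := by exact_mod_cast hkey
      have hsa' : (s:ℤ) ≤ 2 * a := by exact_mod_cast hsa
      have hax' : (a:ℤ) ≤ x := by exact_mod_cast hax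
      have r1 : (0:ℤ) ≤ 2 * x - s := by linarith
      have r2 : (0:ℤ) ≤ 2 * (m:ℤ) - 2 - 2 * x - s := by nlinarith
      have hs1 : 2 * (k:ℤ) ≤ 4 * x * (m:ℤ) - 4 * x ^ 2 - 4 * x + 2 := by
        nlinarith [mul_nonneg r1 r2]
      have hs2 : ((x:ℤ) + 1) * (2 * k) ≤ ((x:ℤ) + 1) * (4 * x * (m:ℤ) - 4 * x ^ 2 - 4 * x + 2) :=
        mul_le_mul_of_nonneg_left hs1 (by positivity)
      have ht : (0:ℤ) ≤ (m:ℤ) - (4 * x ^ 2 + 3 * x) := by linarith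
      have hpoly : (0:ℤ) ≤ 4 * (x:ℤ) ^ 2 + 2 * x - 1 := by nlinarith
      have hx2 : (0:ℤ) ≤ (x:ℤ) - 2 := by linarith
      have hs3 : ((x:ℤ) + 1) * (4 * x * (m:ℤ) - 4 * x ^ 2 - 4 * x + 2) ≤ (m:ℤ) * ((m:ℤ) - 1) := by
        nlinarith [mul_nonneg ht ht, mul_nonneg ht hpoly, mul_nonneg hx2 (by positivity : (0:ℤ) ≤ (x:ℤ) + 1)]
      linarith
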